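/- arXiv:0908.2237 — 3 statements merged into one kernel-verified Lean document; each statement's English description precedes it below -/
import Mathlib

section
/- Let c be an acyclic edge coloring of G − e where e = uv, and let β be a color not appearing on any edge incident to u or v. If the sets of colors appearing at u and at v (with respect to c) are disjoint, then extending c by assigning color β to e yields an acyclic edge coloring of G. -/
/-- A proper edge coloring: edges sharing a vertex receive different colors. -/
def ProperEdgeColoring {V C : Type*} (G : SimpleGraph V) (c : Sym2 V → C) : Prop :=
  ∀ ⦃u v w : V⦄, G.Adj u v → G.Adj u w → v ≠ w → c s(u, v) ≠ c s(u, w)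

/-- An acyclic edge coloring: a proper edge coloring with no bichromatic cycle. -/
def AcyclicEdgeColoring {V C : Type*} (G : SimpleGraph V) (c : Sym2 V → C) : Prop :=
  ProperEdgeColoring G c ∧
    ∀ (v : V) (W : G.Walk v v), W.IsCycle →
      ¬ ∃ α β : C, ∀ e ∈ W.edges, c e = α ∨ c e = β

/-- `colorsAt G c x` (the set `F_x`): the set of colors appearing on edges of `G`
incident to the vertex `x`. -/
def colorsAt {V C : Type*} (G : SimpleGraph V) (c : Sym2 V → C) (x : V) : Set C :=
  {γ | ∃ y, G.Adj x y ∧ c s(x, y) = γ}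

/-- If the first endpoint of a nodup-support walk lies on an edge of the walk,
that edge is the first edge. -/
lemma cons_of_mem_edges_aux {V : Type*} {G : SimpleGraph V} {a b w : V} :
    ∀ {P : G.Walk a b}, P.support.Nodup → s(a, w) ∈ P.edges →
      ∃ (h : G.Adj a w) (Q : G.Walk w b), P = SimpleGraph.Walk.cons h Q := by
  intro P
  cases P with
  | nil => simp
  | cons h q =>
    intro hnd hmem
    rw [SimpleGraph.Walk.support_cons, List.nodup_cons] at hnd
    rw [SimpleGraph.Walk.edges_cons, List.mem_cons] at hmem
    rcases hmem with hmem | hmem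
    · have hadj : G.Adj a w := by
        rename_i y
        have := Sym2.congr_right.mp hmem
        subst this; exact h
      have : w = _ := Sym2.congr_right.mp hmem
      subst this
      exact ⟨h, q, rfl⟩
    · exact absurd (q.fst_mem_support_of_mem_edges hmem) hnd.1

/-- Every nonnil walk has an edge at its first endpoint. -/
lemma exists_edge_at_start {V : Type*} {G : SimpleGraph V} {x y : V}
    (P : G.Walk x y) (hne : ¬ P.Nil) : ∃ z, G.Adj x z ∧ s(x, z) ∈ P.edges := by
  cases P with
  | nil => simp at hne
  | cons h q => exact ⟨_, h, by simp⟩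

/-- Core contradiction: a walk from `v` to `u` avoiding the edge `s(u,v)`, all of whose
edge colors lie in `{α, γ}` with `β ∈ {α, γ}`, yields a color in `F_u ∩ F_v`. -/
lemma core_contradiction {V C : Type*} [DecidableEq V] (G : SimpleGraph V) (u v : V)
    (c : Sym2 V → C) (β : C)
    (hβ : β ∉ colorsAt (G.deleteEdges {s(u, v)}) c u ∪
          colorsAt (G.deleteEdges {s(u, v)}) c v)
    (hdisj : colorsAt (G.deleteEdges {s(u, v)}) c u ∩
             colorsAt (G.deleteEdges {s(u, v)}) c v = ∅)
    {α γ : C} (hβmem : β = α ∨ β = γ)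
    (P : G.Walk v u) (hne : ¬ P.Nil) (hnotin : s(u, v) ∉ P.edges)
    (hcol : ∀ e ∈ P.edges, c e = α ∨ c e = γ) : False := by
  rw [Set.mem_union] at hβ
  push_neg at hβ
  -- edge at v
  obtain ⟨z₁, hadj₁, hmem₁⟩ := exists_edge_at_start P hne
  have hadj₁' : (G.deleteEdges {s(u, v)}).Adj v z₁ := by
    rw [SimpleGraph.deleteEdges_adj]
    refine ⟨hadj₁, ?_⟩
    simp only [Set.mem_singleton_iff]
    intro h
    exact hnotin (h ▸ hmem₁)
  have hδ₁ : c s(v, z₁) ∈ colorsAt (G.deleteEdges {s(u, v)}) c v := ⟨z₁, hadj₁', rfl⟩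
  -- edge at u
  have hne' : ¬ P.reverse.Nil := by
    rw [SimpleGraph.Walk.nil_iff_length_eq] at hne ⊢
    simpa using hne
  obtain ⟨z₂, hadj₂, hmem₂⟩ := exists_edge_at_start P.reverse hne'
  rw [SimpleGraph.Walk.edges_reverse, List.mem_reverse] at hmem₂
  have hadj₂' : (G.deleteEdges {s(u, v)}).Adj u z₂ := by
    rw [SimpleGraph.deleteEdges_adj]
    refine ⟨hadj₂, ?_⟩
    simp only [Set.mem_singleton_iff]
    intro h
    exact hnotin (h ▸ hmem₂)
  have hδ₂ : c s(u, z₂) ∈ colorsAt (G.deleteEdges {s(u, v)}) c u := ⟨z₂, hadj₂', rfl⟩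
  have h₁ := hcol _ hmem₁
  have h₂ := hcol _ hmem₂
  have hδ₁β : c s(v, z₁) ≠ β := fun h => hβ.2 (h ▸ hδ₁)
  have hδ₂β : c s(u, z₂) ≠ β := fun h => hβ.1 (h ▸ hδ₂)
  have key : c s(v, z₁) = c s(u, z₂) := by
    rcases hβmem with rfl | rfl
    · rcases h₁ with h₁ | h₁ <;> rcases h₂ with h₂ | h₂ <;>
        first | (exact absurd h₁ hδ₁β) | (exact absurd h₂ hδ₂β) | (rw [h₁, h₂])
    · rcases h₁ with h₁ | h₁ <;> rcases h₂ with h₂ | h₂ <;>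
        first | (exact absurd h₁ hδ₁β) | (exact absurd h₂ hδ₂β) | (rw [h₁, h₂])
  have : c s(v, z₁) ∈ colorsAt (G.deleteEdges {s(u, v)}) c u ∩
      colorsAt (G.deleteEdges {s(u, v)}) c v := ⟨key ▸ hδ₂, hδ₁⟩
  rw [hdisj] at this
  exact this

/-- Let c be an acyclic edge coloring of G − uv and β a color appearing on no edge
incident to u or v in G − uv. If the color sets F_u and F_v are disjoint, then
assigning β to the edge uv yields an acyclic edge coloring of G. -/
theorem extend_coloring_of_disjoint_colorsAt
    {V C : Type*} [DecidableEq V] (G : SimpleGraph V) (u v : V) (huv : G.Adj u v)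
    (c : Sym2 V → C)
    (hc : AcyclicEdgeColoring (G.deleteEdges {s(u, v)}) c)
    (β : C)
    (hβ : β ∉ colorsAt (G.deleteEdges {s(u, v)}) c u ∪
          colorsAt (G.deleteEdges {s(u, v)}) c v)
    (hdisj : colorsAt (G.deleteEdges {s(u, v)}) c u ∩
             colorsAt (G.deleteEdges {s(u, v)}) c v = ∅) :
    AcyclicEdgeColoring G (Function.update c s(u, v) β) := by
  set G' := G.deleteEdges {s(u, v)} with hG'
  have hβ' := hβ
  rw [Set.mem_union] at hβ'
  push_neg at hβ'
  set c' := Function.update c s(u, v) β with hc'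
  have hc'eq : ∀ e : Sym2 V, e ≠ s(u, v) → c' e = c e := fun e he =>
    Function.update_of_ne he _ _
  have hc'uv : c' s(u, v) = β := Function.update_self _ _ _
  -- colors at u or v come from F_u ∪ F_v
  have hcolAt : ∀ {a b : V}, G.Adj a b → s(a, b) ≠ s(u, v) → (a = u ∨ a = v) →
      c s(a, b) ≠ β := by
    rintro a b hab hne (rfl | rfl)
    · intro h
      exact hβ'.1 (h ▸ ⟨b, SimpleGraph.deleteEdges_adj.mpr ⟨hab, by simpa using hne⟩, rfl⟩)
    · intro h
      exact hβ'.2 (h ▸ ⟨b, SimpleGraph.deleteEdges_adj.mpr ⟨hab, by simpa using hne⟩, rfl⟩)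
  constructor
  · -- properness
    intro a b d hab had hbd
    by_cases h₁ : s(a, b) = s(u, v) <;> by_cases h₂ : s(a, d) = s(u, v)
    · exact absurd (Sym2.congr_right.mp (h₁.trans h₂.symm)) hbd
    · rw [h₁, hc'uv, hc'eq _ h₂]
      have ha : a = u ∨ a = v := by
        rw [Sym2.eq_iff] at h₁
        rcases h₁ with ⟨rfl, rfl⟩ | ⟨rfl, rfl⟩ <;> simp
      exact fun h => hcolAt had h₂ ha h.symm
    · rw [h₂, hc'uv, hc'eq _ h₁]
      have ha : a = u ∨ a = v := by
        rw [Sym2.eq_iff] at h₂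
        rcases h₂ with ⟨rfl, rfl⟩ | ⟨rfl, rfl⟩ <;> simp
      exact hcolAt hab h₁ ha
    · rw [hc'eq _ h₁, hc'eq _ h₂]
      have hab' : G'.Adj a b := SimpleGraph.deleteEdges_adj.mpr ⟨hab, by simpa using h₁⟩
      have had' : G'.Adj a d := SimpleGraph.deleteEdges_adj.mpr ⟨had, by simpa using h₂⟩
      exact hc.1 hab' had' hbd
  · -- acyclicity
    rintro v₀ W hW ⟨α, γ, hcol⟩
    by_cases hmem : s(u, v) ∈ W.edges
    · -- rotate the cycle to start at u
      have hu : u ∈ W.support := W.fst_mem_support_of_mem_edges hmem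
      set W' := W.rotate u hu with hW'def
      have hW' : W'.IsCycle := hW.rotate hu
      have hedges : ∀ e, e ∈ W'.edges ↔ e ∈ W.edges := fun e =>
        (W.rotate_edges u hu).mem_iff
      have hmem' : s(u, v) ∈ W'.edges := (hedges _).mpr hmem
      have hcol' : ∀ e ∈ W'.edges, c' e = α ∨ c' e = γ := fun e he =>
        hcol e ((hedges e).mp he)
      have hβmem : β = α ∨ β = γ := hc'uv ▸ hcol' _ hmem'
      -- decompose W'
      obtain ⟨x, hux, W₁, hEq⟩ := SimpleGraph.Walk.not_nil_iff.mp hW'.not_nil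
      have htrail : W'.edges.Nodup := hW'.1.1.edges_nodup
      rw [hEq, SimpleGraph.Walk.edges_cons, List.nodup_cons] at htrail
      have hcolW₁ : ∀ e ∈ W₁.edges, e ≠ s(u, v) → c e = α ∨ c e = γ := by
        intro e he hene
        have heW' : e ∈ W'.edges := by rw [hEq]; simp [he]
        rw [← hc'eq e hene]
        exact hcol' e heW'
      rw [hEq, SimpleGraph.Walk.edges_cons, List.mem_cons] at hmem'
      rcases hmem' with hfst | hsnd
      · -- first edge is s(u,v): W₁ goes from v to u
        have hvx : v = x := Sym2.congr_right.mp hfst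
        subst hvx
        have hne₁ : ¬ W₁.Nil := SimpleGraph.Walk.not_nil_of_ne (G.ne_of_adj huv).symm
        have hnotin : s(u, v) ∉ W₁.edges := fun h => htrail.1 (hfst ▸ h)
        have hcolW₁' : ∀ e ∈ W₁.edges, c e = α ∨ c e = γ := by
          intro e he
          rw [← hc'eq e (fun h => hnotin (h ▸ he))]
          apply hcol' e
          rw [hEq]; simp [he]
        exact core_contradiction G u v c β hβ hdisj hβmem W₁ hne₁ hnotin hcolW₁'
      · -- s(u,v) is inside W₁
        have hxv : x ≠ v := by
          rintro rfl
          exact htrail.1 hsnd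
        have hndW₁ : W₁.support.Nodup := by
          have := hW'.2
          rw [hEq, SimpleGraph.Walk.support_cons] at this
          simpa using this
        have hndW₁r : W₁.reverse.support.Nodup := by
          rw [SimpleGraph.Walk.support_reverse]
          exact List.nodup_reverse.mpr hndW₁
        have hmemr : s(u, v) ∈ W₁.reverse.edges := by
          rw [SimpleGraph.Walk.edges_reverse, List.mem_reverse]; exact hsnd
        obtain ⟨h', Q, hEq2⟩ := cons_of_mem_edges_aux hndW₁r hmemr
        -- build the walk from v to u: reverse of (cons hux Q.reverse)
        set P : G.Walk v u := (SimpleGraph.Walk.cons hux Q.reverse).reverse with hPdef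
        have hne₁ : ¬ P.Nil := by
          rw [SimpleGraph.Walk.nil_iff_length_eq, hPdef]
          simp
        have hW₁trail : W₁.edges.Nodup := htrail.2
        have hQnotin : s(u, v) ∉ Q.edges := by
          have : W₁.reverse.edges.Nodup := by
            rw [SimpleGraph.Walk.edges_reverse]
            exact List.nodup_reverse.mpr hW₁trail
          rw [hEq2, SimpleGraph.Walk.edges_cons, List.nodup_cons] at this
          exact this.1
        have hPedges : ∀ e ∈ P.edges, e = s(u, x) ∨ e ∈ Q.edges := by
          intro e he
          rw [hPdef, SimpleGraph.Walk.edges_reverse, List.mem_reverse,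
            SimpleGraph.Walk.edges_cons, List.mem_cons,
            SimpleGraph.Walk.edges_reverse, List.mem_reverse] at he
          exact he
        have hnotin : s(u, v) ∉ P.edges := by
          intro h
          rcases hPedges _ h with h | h
          · exact hxv (Sym2.congr_right.mp h).symm
          · exact hQnotin h
        have hQsub : ∀ e ∈ Q.edges, e ∈ W₁.edges := by
          intro e he
          have : e ∈ W₁.reverse.edges := by rw [hEq2]; simp [he]
          rwa [SimpleGraph.Walk.edges_reverse, List.mem_reverse] at this
        have hcolP : ∀ e ∈ P.edges, c e = α ∨ c e = γ := by
          intro e he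
          rcases hPedges _ he with rfl | h
          · have heW' : s(u, x) ∈ W'.edges := by rw [hEq]; simp
            have hene : s(u, x) ≠ s(u, v) := fun h => hxv (Sym2.congr_right.mp h)
            rw [← hc'eq _ hene]
            exact hcol' _ heW'
          · exact hcolW₁ e (hQsub e h) (fun h' => hQnotin (h' ▸ h))
        exact core_contradiction G u v c β hβ hdisj hβmem P hne₁ hnotin hcolP
    · -- the cycle avoids s(u,v): transfer to G'
      have hsub : ∀ e ∈ W.edges, e ∈ G'.edgeSet := by
        intro e he
        rw [hG', SimpleGraph.edgeSet_deleteEdges]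
        exact ⟨W.edges_subset_edgeSet he, by rintro rfl; exact hmem he⟩
      have hWc : (W.transfer G' hsub).IsCycle := hW.transfer hsub
      refine hc.2 v₀ (W.transfer G' hsub) hWc ⟨α, γ, ?_⟩
      intro e he
      rw [SimpleGraph.Walk.edges_transfer] at he
      have hene : e ≠ s(u, v) := fun h => hmem (h ▸ he)
      rw [← hc'eq e hene]
      exact hcol e he
end

section
/- Let c be an acyclic edge coloring of G − e with e = ab, and let β be a candidate color for e (i.e., β appears on no edge incident to a or b). Then assigning β to e fails to be acyclic if and only if there exists a color α, appearing both at a (on an edge other than potential ab) and at b, such that there is a maximal (α,β)-bichromatic path from a to b whose first and last edges are both colored α. -/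
/-- A maximal (α,β)-bichromatic path. -/
def IsMaxBichromaticPath {V C : Type*} (G : SimpleGraph V) (c : Sym2 V → C) (α β : C)
    {a b : V} (p : G.Walk a b) : Prop :=
  p.IsPath ∧ (∀ e ∈ p.edges, c e = α ∨ c e = β) ∧
  (∀ x, G.Adj a x → (c s(a, x) = α ∨ c s(a, x) = β) → s(a, x) ∈ p.edges) ∧
  (∀ x, G.Adj b x → (c s(b, x) = α ∨ c s(b, x) = β) → s(b, x) ∈ p.edges)

/-- An (α,β,ab)-critical path: a maximal (α,β)-bichromatic path from a to b whose
first and last edges are both colored α. -/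
def IsCriticalPath {V C : Type*} (G : SimpleGraph V) (c : Sym2 V → C)
    (α β : C) (a b : V) : Prop :=
  ∃ p : G.Walk a b, IsMaxBichromaticPath G c α β p ∧
    ∃ hne : p.edges ≠ [],
      c (p.edges.head hne) = α ∧ c (p.edges.getLast hne) = α

open SimpleGraph Walk in
/-- Key auxiliary lemma: a bichromatic (in colors `α₁, α₂`, one of which is `β`)
path `q` from `b` to `a` avoiding the edge `ab` yields a critical path. -/
lemma aux_critical {V C : Type*} [DecidableEq V] {G : SimpleGraph V} {a b : V}
    (hab : G.Adj a b) {c : Sym2 V → C}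
    (hc : AcyclicEdgeColoring (G.deleteEdges {s(a, b)}) c) {β : C}
    (hβ : β ∉ colorsAt (G.deleteEdges {s(a, b)}) c a ∪
          colorsAt (G.deleteEdges {s(a, b)}) c b)
    {α₁ α₂ : C} (hβ12 : β = α₁ ∨ β = α₂)
    (q : G.Walk b a) (hq : q.IsPath) (hqe : s(a, b) ∉ q.edges)
    (hcol : ∀ e ∈ q.edges, c e = α₁ ∨ c e = α₂) :
    ∃ α : C, α ∈ colorsAt (G.deleteEdges {s(a, b)}) c a ∧
      α ∈ colorsAt (G.deleteEdges {s(a, b)}) c b ∧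
      IsCriticalPath (G.deleteEdges {s(a, b)}) c α β a b := by
  have hqnil : ¬ q.Nil := Walk.not_nil_of_ne hab.ne'
  obtain ⟨z, h₃, q₃, hq3⟩ := Walk.not_nil_iff.mp hqnil
  have hqrnil : ¬ q.reverse.Nil := Walk.not_nil_of_ne hab.ne
  obtain ⟨x, h₄, r₄, hq4⟩ := Walk.not_nil_iff.mp hqrnil
  have hsub : ∀ e ∈ q.reverse.edges, e ∈ (G.deleteEdges {s(a, b)}).edgeSet := by
    intro e he
    rw [Walk.edges_reverse, List.mem_reverse] at he
    rw [edgeSet_deleteEdges]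
    refine ⟨q.edges_subset_edgeSet he, ?_⟩
    intro h
    rw [Set.mem_singleton_iff] at h
    exact hqe (h ▸ he)
  set p : (G.deleteEdges {s(a, b)}).Walk a b := q.reverse.transfer _ hsub with hp
  have hpe : p.edges = q.edges.reverse := by
    rw [hp, Walk.edges_transfer, Walk.edges_reverse]
  have hpe' : p.edges = s(a, x) :: r₄.edges := by
    rw [hp, Walk.edges_transfer, hq4, Walk.edges_cons]
  have hax_mem : s(a, x) ∈ q.edges := by
    rw [← List.mem_reverse, ← hpe, hpe']
    exact List.mem_cons_self
  have hbz_mem : s(b, z) ∈ q.edges := by rw [hq3]; simp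
  have hax_ne : s(a, x) ≠ s(a, b) := fun h => hqe (h ▸ hax_mem)
  have hbz_ne : s(b, z) ≠ s(a, b) := fun h => hqe (h ▸ hbz_mem)
  have hG'ax : (G.deleteEdges {s(a, b)}).Adj a x :=
    SimpleGraph.deleteEdges_adj.mpr ⟨h₄, by simpa using hax_ne⟩
  have hG'bz : (G.deleteEdges {s(a, b)}).Adj b z :=
    SimpleGraph.deleteEdges_adj.mpr ⟨h₃, by simpa using hbz_ne⟩
  have hαa : c s(a, x) ∈ colorsAt (G.deleteEdges {s(a, b)}) c a := ⟨x, hG'ax, rfl⟩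
  have hαβ : c s(a, x) ≠ β := fun h => hβ (Set.mem_union_left _ (h ▸ hαa))
  have hcol' : ∀ e ∈ q.edges, c e = c s(a, x) ∨ c e = β := by
    have hαmem : c s(a, x) = α₁ ∨ c s(a, x) = α₂ := hcol _ hax_mem
    rcases hβ12 with rfl | rfl
    · have hA : c s(a, x) = α₂ := hαmem.resolve_left hαβ
      intro e he
      rcases hcol e he with h | h
      · exact Or.inr h
      · exact Or.inl (by rw [hA]; exact h)
    · have hA : c s(a, x) = α₁ := hαmem.resolve_right hαβ
      intro e he
      rcases hcol e he with h | h
      · exact Or.inl (by rw [hA]; exact h)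
      · exact Or.inr h
  have hcz : c s(b, z) = c s(a, x) :=
    (hcol' _ hbz_mem).resolve_right
      (fun h => hβ (Set.mem_union_right _ ⟨z, hG'bz, h⟩))
  have hαb : c s(a, x) ∈ colorsAt (G.deleteEdges {s(a, b)}) c b := ⟨z, hG'bz, hcz⟩
  have hppath : p.IsPath := hq.reverse.transfer hsub
  have hmaxa : ∀ x', (G.deleteEdges {s(a, b)}).Adj a x' →
      (c s(a, x') = c s(a, x) ∨ c s(a, x') = β) → s(a, x') ∈ p.edges := by
    intro x' hadj hcc
    rcases hcc with hcc | hcc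
    · by_cases hx : x' = x
      · subst hx; rw [hpe']; exact List.mem_cons_self
      · exact absurd hcc (hc.1 hadj hG'ax hx)
    · exact absurd (Set.mem_union_left _
        (show β ∈ colorsAt (G.deleteEdges {s(a, b)}) c a from ⟨x', hadj, hcc⟩)) hβ
  have hmaxb : ∀ x', (G.deleteEdges {s(a, b)}).Adj b x' →
      (c s(b, x') = c s(a, x) ∨ c s(b, x') = β) → s(b, x') ∈ p.edges := by
    intro x' hadj hcc
    rcases hcc with hcc | hcc
    · by_cases hx : x' = z
      · subst hx; rw [hpe, List.mem_reverse]; exact hbz_mem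
      · have h5 := hc.1 hadj hG'bz hx
        rw [hcz] at h5
        exact absurd hcc h5
    · exact absurd (Set.mem_union_right _
        (show β ∈ colorsAt (G.deleteEdges {s(a, b)}) c b from ⟨x', hadj, hcc⟩)) hβ
  have hne : p.edges ≠ [] := by rw [hpe']; simp
  have hhead : ∀ (h : p.edges ≠ []), p.edges.head h = s(a, x) := by
    rw [hpe']; intro h; rfl
  have hpe2 : p.edges = (s(b, z) :: q₃.edges).reverse := by
    rw [hpe, hq3, Walk.edges_cons]
  have hlast : ∀ (h : p.edges ≠ []), p.edges.getLast h = s(b, z) := by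
    rw [hpe2]; intro h
    rw [List.getLast_reverse]
    rfl
  refine ⟨c s(a, x), hαa, hαb, p, ⟨hppath, ?_, hmaxa, hmaxb⟩, hne, ?_, ?_⟩
  · intro e he
    rw [hpe, List.mem_reverse] at he
    exact hcol' e he
  · rw [hhead hne]
  · rw [hlast hne]; exact hcz

open SimpleGraph in
/-- Critical-path characterization: a candidate color β for the edge ab fails to
give an acyclic extension iff there is a color α appearing at both a and b such
that there is an (α,β,ab)-critical path. -/
theorem candidate_not_valid_iff_critical_path
    {V C : Type*} [DecidableEq V] (G : SimpleGraph V) (a b : V) (hab : G.Adj a b)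
    (c : Sym2 V → C)
    (hc : AcyclicEdgeColoring (G.deleteEdges {s(a, b)}) c)
    (β : C)
    (hβ : β ∉ colorsAt (G.deleteEdges {s(a, b)}) c a ∪
          colorsAt (G.deleteEdges {s(a, b)}) c b) :
    ¬ AcyclicEdgeColoring G (Function.update c s(a, b) β) ↔
      ∃ α : C, α ∈ colorsAt (G.deleteEdges {s(a, b)}) c a ∧
        α ∈ colorsAt (G.deleteEdges {s(a, b)}) c b ∧
        IsCriticalPath (G.deleteEdges {s(a, b)}) c α β a b := by
  constructor
  · intro h
    have hproper : ProperEdgeColoring G (Function.update c s(a, b) β) := by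
      intro u v w huv huw hvw
      by_cases h1 : s(u, v) = s(a, b) <;> by_cases h2 : s(u, w) = s(a, b)
      · exact absurd (Sym2.congr_right.mp (h1.trans h2.symm)) hvw
      · rw [h1, Function.update_self, Function.update_of_ne h2]
        intro hcontra
        have hmem : s(u, w) ∉ ({s(a, b)} : Set (Sym2 V)) := by simpa using h2
        rcases Sym2.eq_iff.mp h1 with ⟨rfl, rfl⟩ | ⟨rfl, rfl⟩
        · exact hβ (Set.mem_union_left _
            ⟨w, SimpleGraph.deleteEdges_adj.mpr ⟨huw, hmem⟩, hcontra.symm⟩)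
        · exact hβ (Set.mem_union_right _
            ⟨w, SimpleGraph.deleteEdges_adj.mpr ⟨huw, hmem⟩, hcontra.symm⟩)
      · rw [h2, Function.update_self, Function.update_of_ne h1]
        intro hcontra
        have hmem : s(u, v) ∉ ({s(a, b)} : Set (Sym2 V)) := by simpa using h1
        rcases Sym2.eq_iff.mp h2 with ⟨rfl, rfl⟩ | ⟨rfl, rfl⟩
        · exact hβ (Set.mem_union_left _
            ⟨v, SimpleGraph.deleteEdges_adj.mpr ⟨huv, hmem⟩, hcontra⟩)
        · exact hβ (Set.mem_union_right _
            ⟨v, SimpleGraph.deleteEdges_adj.mpr ⟨huv, hmem⟩, hcontra⟩)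
      · rw [Function.update_of_ne h1, Function.update_of_ne h2]
        have hmem1 : s(u, v) ∉ ({s(a, b)} : Set (Sym2 V)) := by simpa using h1
        have hmem2 : s(u, w) ∉ ({s(a, b)} : Set (Sym2 V)) := by simpa using h2
        exact hc.1 (SimpleGraph.deleteEdges_adj.mpr ⟨huv, hmem1⟩)
          (SimpleGraph.deleteEdges_adj.mpr ⟨huw, hmem2⟩) hvw
    rw [AcyclicEdgeColoring, not_and] at h
    have h2 := h hproper
    push_neg at h2
    obtain ⟨v, W, hWcyc, α₁, α₂, hWcol⟩ := h2
    by_cases hmem : s(a, b) ∈ W.edges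
    · -- the cycle uses the edge ab
      have haW : a ∈ W.support := W.fst_mem_support_of_mem_edges hmem
      obtain ⟨d, hdcyc, hdmem, hdcol⟩ :
          ∃ d : G.Walk a a, d.IsCycle ∧ s(a, b) ∈ d.edges ∧
            ∀ e ∈ d.edges, Function.update c s(a, b) β e = α₁ ∨
              Function.update c s(a, b) β e = α₂ := by
        refine ⟨W.rotate a haW, hWcyc.rotate haW, ?_, ?_⟩
        · exact (W.rotate_edges a haW).perm.mem_iff.mpr hmem
        · intro e he
          exact hWcol e ((W.rotate_edges a haW).perm.mem_iff.mp he)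
      have hβ12 : β = α₁ ∨ β = α₂ := by
        have h6 := hdcol _ hdmem
        rwa [Function.update_self] at h6
      have hdnil : ¬ d.Nil := fun hn => hdcyc.ne_nil hn.eq_nil
      obtain ⟨x₀, h₀, d₀, rfl⟩ := Walk.not_nil_iff.mp hdnil
      obtain ⟨hd₀path, hd₀nmem⟩ := (SimpleGraph.Walk.cons_isCycle_iff d₀ h₀).mp hdcyc
      by_cases hbx : b = x₀
      · subst hbx
        refine aux_critical hab hc hβ hβ12 d₀ hd₀path hd₀nmem ?_
        intro e he
        have h7 := hdcol e (by rw [Walk.edges_cons]; exact List.mem_cons_of_mem _ he)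
        rwa [Function.update_of_ne (fun hh => hd₀nmem (by rw [← hh]; exact he))] at h7
      · -- the edge ab is not the first edge of d; it must be the last one
        have hmem₀ : s(a, b) ∈ d₀.edges := by
          rw [Walk.edges_cons, List.mem_cons] at hdmem
          rcases hdmem with h8 | h8
          · exact absurd (Sym2.congr_right.mp h8) hbx
          · exact h8
        have hd₀nil : ¬ d₀.Nil := by
          intro hn
          have hl := Walk.nil_iff_length_eq.mp hn
          have h9 : d₀.edges = [] :=
            List.eq_nil_of_length_eq_zero (by rw [Walk.length_edges, hl])
          rw [h9] at hmem₀
          exact List.not_mem_nil hmem₀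
        have hd₀rnil : ¬ d₀.reverse.Nil := by
          rw [Walk.nil_iff_length_eq, Walk.length_reverse]
          exact fun h10 => hd₀nil (Walk.nil_iff_length_eq.mpr h10)
        obtain ⟨y, h₂, r, hrev⟩ := Walk.not_nil_iff.mp hd₀rnil
        have hd₀eq : d₀ = (Walk.cons h₂ r).reverse := by
          rw [← hrev, Walk.reverse_reverse]
        have hd₀edges : d₀.edges = (s(a, y) :: r.edges).reverse := by
          rw [hd₀eq, Walk.edges_reverse, Walk.edges_cons]
        have hrpath : (Walk.cons h₂ r).IsPath := by
          rw [← SimpleGraph.Walk.isPath_reverse_iff, ← hd₀eq]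
          exact hd₀path
        obtain ⟨hrp, har⟩ := (SimpleGraph.Walk.cons_isPath_iff h₂ r).mp hrpath
        have habr : s(a, b) ∉ r.edges := fun hh =>
          har (r.fst_mem_support_of_mem_edges hh)
        have hyb : b = y := by
          rw [hd₀edges, List.mem_reverse, List.mem_cons] at hmem₀
          rcases hmem₀ with h11 | h11
          · exact Sym2.congr_right.mp h11
          · exact absurd h11 habr
        subst hyb
        -- now r : G.Walk b x₀ ; build the walk r.concat h₀.symm : G.Walk b a
        have hQpath : (r.concat h₀.symm).IsPath := by
          rw [← SimpleGraph.Walk.isPath_reverse_iff, Walk.reverse_concat,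
            Walk.cons_isPath_iff]
          refine ⟨hrp.reverse, ?_⟩
          rw [Walk.support_reverse, List.mem_reverse]
          exact har
        have hax₀ : s(a, b) ≠ s(x₀, a) := by
          intro hh
          rcases Sym2.eq_iff.mp hh with ⟨hh1, _⟩ | ⟨_, hh2⟩
          · exact G.ne_of_adj h₀ hh1
          · exact hbx hh2
        refine aux_critical hab hc hβ hβ12 (r.concat h₀.symm) hQpath ?_ ?_
        · rw [Walk.edges_concat, List.concat_eq_append]
          intro hh
          rcases List.mem_append.mp hh with hh | hh
          · exact habr hh
          · exact hax₀ (List.mem_singleton.mp hh)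
        · intro e he
          rw [Walk.edges_concat, List.concat_eq_append] at he
          rcases List.mem_append.mp he with he | he
          · have hin : e ∈ d₀.edges := by
              rw [hd₀edges, List.mem_reverse]
              exact List.mem_cons_of_mem _ he
            have h12 := hdcol e (by rw [Walk.edges_cons]; exact List.mem_cons_of_mem _ hin)
            rwa [Function.update_of_ne (fun hh => habr (by rw [← hh]; exact he))] at h12
          · rw [List.mem_singleton] at he
            subst he
            have hswap : s(x₀, a) = s(a, x₀) := Sym2.eq_swap
            have h13 := hdcol s(x₀, a)
              (by rw [Walk.edges_cons, hswap]; exact List.mem_cons_self)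
            rwa [Function.update_of_ne (fun hh => hax₀ hh.symm)] at h13
    · -- the cycle avoids the edge ab : contradiction with acyclicity of c
      exfalso
      have hsub : ∀ e ∈ W.edges, e ∈ (G.deleteEdges {s(a, b)}).edgeSet := by
        intro e he
        rw [SimpleGraph.edgeSet_deleteEdges]
        refine ⟨W.edges_subset_edgeSet he, fun hh => ?_⟩
        rw [Set.mem_singleton_iff] at hh
        exact hmem (hh ▸ he)
      refine hc.2 v (W.transfer _ hsub) (hWcyc.transfer hsub) ⟨α₁, α₂, ?_⟩
      intro e he
      rw [Walk.edges_transfer] at he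
      have h14 := hWcol e he
      rwa [Function.update_of_ne (fun hh => hmem (by rw [← hh]; exact he))] at h14
  · rintro ⟨α, hαa, hαb, p, ⟨hppath, hpcol, _, _⟩, hne, _, _⟩ hA
    have hnsab : ∀ e ∈ p.edges, e ∈ G.edgeSet ∧ e ≠ s(a, b) := by
      intro e he
      have h1 := p.edges_subset_edgeSet he
      rw [SimpleGraph.edgeSet_deleteEdges] at h1
      exact ⟨h1.1, by simpa using h1.2⟩
    have hPedges : (p.transfer G (fun e he => (hnsab e he).1)).edges = p.edges :=
      Walk.edges_transfer _ _
    have hW : (Walk.cons hab (p.transfer G (fun e he => (hnsab e he).1)).reverse).IsCycle := by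
      rw [SimpleGraph.Walk.cons_isCycle_iff]
      refine ⟨(hppath.transfer _).reverse, ?_⟩
      rw [Walk.edges_reverse, List.mem_reverse, hPedges]
      exact fun hh => (hnsab _ hh).2 rfl
    refine hA.2 a _ hW ⟨α, β, ?_⟩
    intro e he
    rw [Walk.edges_cons, List.mem_cons] at he
    rcases he with rfl | he
    · right; exact Function.update_self _ _ _
    · rw [Walk.edges_reverse, List.mem_reverse, hPedges] at he
      rw [Function.update_of_ne (hnsab e he).2]
      exact hpcol e he
end

section
/- Let c be an acyclic edge coloring of G − ab and suppose F_a ∩ F_b = {α}, realized by an edge au with c(a,u) = α. If no candidate color for ab is valid, then every candidate color appears on an edge incident to u (other than au); in particular the number of candidate colors is at most d(u) − 1. -/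
/-- `S_{xy}`: colors on edges incident to `y` other than the edge `xy`. -/
def colorsAtOther {V C : Type*} (G : SimpleGraph V) (c : Sym2 V → C)
    (x y : V) : Set C :=
  {γ | ∃ z, G.Adj y z ∧ z ≠ x ∧ c s(y, z) = γ}

open SimpleGraph Walk

lemma aux_fst_ne {V : Type*} {G : SimpleGraph V} {v w : V} (p : G.Walk v w)
    (hnd : p.support.Nodup) : ∀ d ∈ p.darts, d.fst ≠ w := by
  induction p with
  | nil => simp
  | @cons u x w h q ih =>
    rw [Walk.support_cons, List.nodup_cons] at hnd
    intro d hd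
    rw [Walk.darts_cons, List.mem_cons] at hd
    rcases hd with rfl | hd
    · exact fun hf => hnd.1 (hf ▸ q.end_mem_support)
    · exact ih hnd.2 d hd

lemma aux_snd_ne {V : Type*} {G : SimpleGraph V} {v w : V} (p : G.Walk v w)
    (hnd : p.support.Nodup) : ∀ d ∈ p.darts, d.snd ≠ v := by
  cases p with
  | nil => simp
  | @cons u x w h q =>
    rw [Walk.support_cons, List.nodup_cons] at hnd
    intro d hd
    rw [Walk.darts_cons, List.mem_cons] at hd
    have hmem : d.snd ∈ q.support := by
      rcases hd with rfl | hd
      · exact q.start_mem_support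
      · exact Walk.dart_snd_mem_support_of_mem_darts _ hd
    exact fun hf => hnd.1 (hf ▸ hmem)

lemma aux_snd_inj {V : Type*} {G : SimpleGraph V} {v w : V} (p : G.Walk v w)
    (hnd : p.support.Nodup) : ∀ d₁ ∈ p.darts, ∀ d₂ ∈ p.darts, d₁.snd = d₂.snd → d₁ = d₂ := by
  induction p with
  | nil => simp
  | @cons u x w h q ih =>
    have hnd' := hnd
    rw [Walk.support_cons, List.nodup_cons] at hnd'
    intro d₁ h₁ d₂ h₂ hsnd
    rw [Walk.darts_cons, List.mem_cons] at h₁ h₂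
    rcases h₁ with rfl | h₁ <;> rcases h₂ with rfl | h₂
    · rfl
    · exact absurd hsnd.symm (aux_snd_ne q hnd'.2 d₂ h₂)
    · exact absurd hsnd (aux_snd_ne q hnd'.2 d₁ h₁)
    · exact ih hnd'.2 d₁ h₁ d₂ h₂ hsnd

/-- Let c be an acyclic edge coloring of G − ab with F_a ∩ F_b = {α}, realized by
an edge au with c(a,u) = α. If no candidate color for ab is valid, then every
candidate color appears at u on an edge other than au, and the number of
candidate colors is at most d(u) − 1. -/
theorem candidates_through_common_neighbor
    {V χ : Type*} [Fintype V] [Fintype χ] [DecidableEq V]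
    (G : SimpleGraph V) [DecidableRel G.Adj]
    (a b u : V) (hab : G.Adj a b)
    (c : Sym2 V → χ) (α : χ)
    (hc : AcyclicEdgeColoring (G.deleteEdges {s(a, b)}) c)
    (hau : (G.deleteEdges {s(a, b)}).Adj a u) (hα : c s(a, u) = α)
    (hinter : colorsAt (G.deleteEdges {s(a, b)}) c a ∩
              colorsAt (G.deleteEdges {s(a, b)}) c b = {α})
    (hfail : ∀ β : χ,
      β ∉ colorsAt (G.deleteEdges {s(a, b)}) c a ∪
          colorsAt (G.deleteEdges {s(a, b)}) c b →
      ¬ AcyclicEdgeColoring G (Function.update c s(a, b) β)) :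
    (∀ β : χ,
      β ∉ colorsAt (G.deleteEdges {s(a, b)}) c a ∪
          colorsAt (G.deleteEdges {s(a, b)}) c b →
      β ∈ colorsAtOther (G.deleteEdges {s(a, b)}) c a u) ∧
    {β : χ | β ∉ colorsAt (G.deleteEdges {s(a, b)}) c a ∪
             colorsAt (G.deleteEdges {s(a, b)}) c b}.ncard ≤ G.degree u - 1 := by
  classical
  set G' := G.deleteEdges {s(a, b)} with hG'
  have hab' : a ≠ b := hab.ne
  have hau' : G.Adj a u := (SimpleGraph.deleteEdges_adj.mp hau).1
  have hauab : s(a, u) ≠ s(a, b) := by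
    have := (SimpleGraph.deleteEdges_adj.mp hau).2
    simpa using this
  have hub : u ≠ b := fun h => hauab (by rw [h])
  have hua : u ≠ a := hau'.ne'
  have key : ∀ β : χ,
      β ∉ colorsAt G' c a ∪ colorsAt G' c b →
      β ∈ colorsAtOther G' c a u := by
    intro β hβ
    rw [Set.mem_union] at hβ
    push_neg at hβ
    obtain ⟨hβa, hβb⟩ := hβ
    set c' := Function.update c s(a, b) β with hc'
    -- c' is a proper edge coloring of G
    have hproper : ProperEdgeColoring G c' := by
      intro x y z hxy hxz hyz
      show Function.update c s(a, b) β s(x, y) ≠ Function.update c s(a, b) β s(x, z)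
      by_cases h1 : s(x, y) = s(a, b) <;> by_cases h2 : s(x, z) = s(a, b)
      · exact absurd (Sym2.congr_right.mp (h1.trans h2.symm)) hyz
      · have hG'xz : G'.Adj x z := SimpleGraph.deleteEdges_adj.mpr ⟨hxz, by simpa using h2⟩
        rw [h1, Function.update_self, Function.update_of_ne h2]
        intro hcontr
        rcases Sym2.eq_iff.mp h1 with ⟨rfl, rfl⟩ | ⟨rfl, rfl⟩
        · exact hβa ⟨z, hG'xz, hcontr.symm⟩
        · exact hβb ⟨z, hG'xz, hcontr.symm⟩
      · have hG'xy : G'.Adj x y := SimpleGraph.deleteEdges_adj.mpr ⟨hxy, by simpa using h1⟩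
        rw [h2, Function.update_self, Function.update_of_ne h1]
        intro hcontr
        rcases Sym2.eq_iff.mp h2 with ⟨rfl, rfl⟩ | ⟨rfl, rfl⟩
        · exact hβa ⟨y, hG'xy, hcontr⟩
        · exact hβb ⟨y, hG'xy, hcontr⟩
      · have hG'xy : G'.Adj x y := SimpleGraph.deleteEdges_adj.mpr ⟨hxy, by simpa using h1⟩
        have hG'xz : G'.Adj x z := SimpleGraph.deleteEdges_adj.mpr ⟨hxz, by simpa using h2⟩
        rw [Function.update_of_ne h1, Function.update_of_ne h2]
        exact hc.1 hG'xy hG'xz hyz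
    -- extract a bichromatic cycle
    have hnQ : ¬ ∀ (v : V) (W : G.Walk v v), W.IsCycle →
        ¬ ∃ γ δ : χ, ∀ e ∈ W.edges, c' e = γ ∨ c' e = δ := by
      intro hQ
      exact hfail β (by rw [Set.mem_union]; push_neg; exact ⟨hβa, hβb⟩) ⟨hproper, hQ⟩
    push_neg at hnQ
    obtain ⟨v, W, hWcyc, γ, δ, hγδ⟩ := hnQ
    by_cases habW : s(a, b) ∈ W.edges
    case neg =>
      exfalso
      have hp : ∀ e ∈ W.edges, e ∉ ({s(a, b)} : Set (Sym2 V)) := fun e he => by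
        rw [Set.mem_singleton_iff]; rintro rfl; exact habW he
      refine hc.2 v (W.toDeleteEdges _ hp) (hWcyc.transfer _) ⟨γ, δ, fun e he => ?_⟩
      rw [Walk.edges_transfer] at he
      have hne : e ≠ s(a, b) := by rintro rfl; exact habW he
      have : c e = c' e := by rw [hc', Function.update_of_ne hne]
      rw [this]; exact hγδ e he
    case pos =>
      have haW : a ∈ W.support := W.fst_mem_support_of_mem_edges habW
      set W' := W.rotate a haW with hW'def
      have hW'cyc : W'.IsCycle := hWcyc.rotate haW
      have hedges : ∀ e, e ∈ W'.edges ↔ e ∈ W.edges := fun e => (Walk.rotate_edges W a haW).mem_iff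
      obtain ⟨x, hax, p, hWeq⟩ := Walk.not_nil_iff.mp hW'cyc.not_nil
      rw [hWeq] at hW'cyc hedges
      obtain ⟨hpath, hfe⟩ := (Walk.cons_isCycle_iff p hax).mp hW'cyc
      have hmemE : s(a, b) ∈ (Walk.cons hax p).edges := (hedges _).mpr habW
      have hβval : c' s(a, b) = β := by rw [hc']; exact Function.update_self _ _ _
      have hS0 : ∀ e ∈ (Walk.cons hax p).edges, c' e = γ ∨ c' e = δ :=
        fun e he => hγδ e ((hedges e).mp he)
      have hor : β = γ ∨ β = δ := by rw [← hβval]; exact hS0 _ hmemE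
      obtain ⟨δ₀, hS⟩ : ∃ δ₀, ∀ e ∈ (Walk.cons hax p).edges, c' e = β ∨ c' e = δ₀ := by
        rcases hor with rfl | rfl
        · exact ⟨δ, hS0⟩
        · exact ⟨γ, fun e he => (hS0 e he).symm⟩
      clear hS0 hγδ hor hβval
      obtain ⟨y, q, hya, hconcat⟩ := Walk.exists_cons_eq_concat hax p
      have hEq : (Walk.cons hax p).edges = q.edges ++ [s(y, a)] := by
        rw [hconcat, Walk.edges_concat, List.concat_eq_append]
      have hnodupE : (Walk.cons hax p).edges.Nodup := hW'cyc.isCircuit.isTrail.edges_nodup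
      have he2notq : s(y, a) ∉ q.edges := by
        rw [hEq] at hnodupE
        exact fun h => (List.nodup_append.mp hnodupE).2.2 _ h _ (List.mem_singleton_self _) rfl
      have he2p : s(y, a) ∈ p.edges := by
        rw [Walk.edges_cons] at hEq
        cases hq0 : q.edges with
        | nil =>
          rw [hq0] at hEq
          simp only [List.nil_append, List.cons.injEq] at hEq
          exfalso
          have hxa : x = a := Walk.eq_of_length_eq_zero
            (by rw [← Walk.length_edges, hEq.2]; rfl)
          exact G.irrefl (hxa ▸ hax)
        | cons e t =>
          rw [hq0] at hEq
          simp only [List.cons_append, List.cons.injEq] at hEq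
          rw [hEq.2]
          simp
      have he1e2 : s(a, x) ≠ s(y, a) := fun h => hfe (by rw [h]; exact he2p)
      have he2E : s(y, a) ∈ (Walk.cons hax p).edges := by rw [hEq]; simp
      rw [Walk.edges_cons, List.mem_cons] at hmemE
      rcases hmemE with hA | hB
      · -- Case A : the first edge of the cycle is ab
        have hbx : b = x := Sym2.congr_right.mp hA
        subst hbx
        have hyb : y ≠ b := fun h => he1e2 (by rw [h, Sym2.eq_swap])
        have he2ab : s(y, a) ≠ s(a, b) := fun h => he1e2 h.symm
        have hG'ay : G'.Adj a y := SimpleGraph.deleteEdges_adj.mpr ⟨hya.symm, by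
          rw [Set.mem_singleton_iff]
          exact fun h => hyb (Sym2.congr_right.mp h)⟩
        have hcy : c s(a, y) = δ₀ := by
          have h1 := hS _ he2E
          rw [hc', Function.update_of_ne he2ab] at h1
          rw [show s(y, a) = s(a, y) from Sym2.eq_swap] at h1
          rcases h1 with h1 | h1
          · exact absurd ⟨y, hG'ay, h1⟩ hβa
          · exact h1
        have hpnil : ¬ p.Nil := Walk.not_nil_of_ne (Ne.symm hab')
        obtain ⟨z, hbz, r, hpeq⟩ := Walk.not_nil_iff.mp hpnil
        have hbzp : s(b, z) ∈ p.edges := by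
          rw [hpeq, Walk.edges_cons]; exact List.mem_cons_self
        have hza : z ≠ a := by
          rintro rfl
          exact hfe (by rw [Sym2.eq_swap]; exact hbzp)
        have hbzab : s(b, z) ≠ s(a, b) := fun h => by
          rcases Sym2.eq_iff.mp h with ⟨h1, h2⟩ | ⟨h1, h2⟩
          · exact hab' h1.symm
          · exact hza h2
        have hG'bz : G'.Adj b z := SimpleGraph.deleteEdges_adj.mpr ⟨hbz, by
          rw [Set.mem_singleton_iff]; exact hbzab⟩
        have hcz : c s(b, z) = δ₀ := by
          have h1 := hS _ (by rw [Walk.edges_cons]; exact List.mem_cons_of_mem _ hbzp)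
          rw [hc', Function.update_of_ne hbzab] at h1
          rcases h1 with h1 | h1
          · exact absurd ⟨z, hG'bz, h1⟩ hβb
          · exact h1
        have hδα : δ₀ = α := by
          have hmem : δ₀ ∈ colorsAt G' c a ∩ colorsAt G' c b :=
            ⟨⟨y, hG'ay, hcy⟩, ⟨z, hG'bz, hcz⟩⟩
          rw [hinter] at hmem
          exact hmem
        have huy : u = y := by
          by_contra hne
          exact hc.1 hG'ay hau (fun hh => hne hh.symm) (by rw [hcy, hδα, hα])
        subst huy
        have hqnil : ¬ q.Nil := Walk.not_nil_of_ne (Ne.symm hua)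
        obtain ⟨w₀, haw₀, q₀, hqeq⟩ := Walk.not_nil_iff.mp hqnil
        obtain ⟨z', r₂, hz'u, hqc⟩ := Walk.exists_cons_eq_concat haw₀ q₀
        have hzuq : s(z', u) ∈ q.edges := by
          rw [hqeq, hqc, Walk.edges_concat]; simp
        have hz'a : z' ≠ a := by
          rintro rfl
          exact he2notq (by rw [Sym2.eq_swap]; exact hzuq)
        have hzuE : s(z', u) ∈ (Walk.cons hax p).edges := by
          rw [hEq]; exact List.mem_append_left _ hzuq
        have hzuab : s(z', u) ≠ s(a, b) := fun h => by
          rcases Sym2.eq_iff.mp h with ⟨h1, h2⟩ | ⟨h1, h2⟩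
          · exact hub h2
          · exact hua h2
        have hG'uz : G'.Adj u z' := SimpleGraph.deleteEdges_adj.mpr ⟨hz'u.symm, by
          rw [Set.mem_singleton_iff]
          exact fun h => hzuab (Sym2.eq_swap.trans h)⟩
        have hfinal : c s(u, z') = β := by
          have h1 := hS _ hzuE
          rw [hc', Function.update_of_ne hzuab] at h1
          rw [show s(z', u) = s(u, z') from Sym2.eq_swap] at h1
          rcases h1 with h1 | h1
          · exact h1
          · exfalso
            refine hc.1 hG'uz hau.symm hz'a ?_
            rw [h1, hδα, show s(u, a) = s(a, u) from Sym2.eq_swap, hα]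
        exact ⟨z', hG'uz, hz'a, hfinal⟩
      · -- Case B : ab appears inside p; then the last edge of the cycle is ba
        have hsup : p.support.Nodup := hpath.support_nodup
        obtain ⟨d, hd, hde⟩ := List.mem_map.mp hB
        have hde' : s(d.fst, d.snd) = s(a, b) := hde
        obtain ⟨hf, hs⟩ : d.fst = b ∧ d.snd = a := by
          rcases Sym2.eq_iff.mp hde' with h | h
          · exact absurd h.1 (aux_fst_ne p hsup d hd)
          · exact h
        obtain ⟨d₂, hd₂, hde₂⟩ := List.mem_map.mp he2p
        have hde₂' : s(d₂.fst, d₂.snd) = s(y, a) := hde₂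
        obtain ⟨hf₂, hs₂⟩ : d₂.fst = y ∧ d₂.snd = a := by
          rcases Sym2.eq_iff.mp hde₂' with h | h
          · exact h
          · exact absurd h.1 (aux_fst_ne p hsup d₂ hd₂)
        have hdd : d = d₂ := aux_snd_inj p hsup d hd d₂ hd₂ (by rw [hs, hs₂])
        have hby : b = y := by rw [← hf₂, ← hdd, hf]
        subst hby
        have he1ab : s(a, x) ≠ s(a, b) := fun h => hfe (by rw [h]; exact hB)
        have hxbne : x ≠ b := fun h => he1ab (by rw [h])
        have hG'ax : G'.Adj a x := SimpleGraph.deleteEdges_adj.mpr ⟨hax, by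
          rw [Set.mem_singleton_iff]; exact he1ab⟩
        have hcx : c s(a, x) = δ₀ := by
          have h1 := hS _ (by rw [Walk.edges_cons]; exact List.mem_cons_self)
          rw [hc', Function.update_of_ne he1ab] at h1
          rcases h1 with h1 | h1
          · exact absurd ⟨x, hG'ax, h1⟩ hβa
          · exact h1
        have hqnil : ¬ q.Nil := Walk.not_nil_of_ne hab'
        obtain ⟨w₀, haw₀, q₀, hqeq⟩ := Walk.not_nil_iff.mp hqnil
        obtain ⟨z, r₂, hzb, hqc⟩ := Walk.exists_cons_eq_concat haw₀ q₀
        have hzbq : s(z, b) ∈ q.edges := by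
          rw [hqeq, hqc, Walk.edges_concat]; simp
        have hza : z ≠ a := by
          rintro rfl
          exact he2notq (by rw [Sym2.eq_swap]; exact hzbq)
        have hzbab : s(z, b) ≠ s(a, b) := fun h => by
          rcases Sym2.eq_iff.mp h with ⟨h1, h2⟩ | ⟨h1, h2⟩
          · exact hza h1
          · exact hab' h2.symm
        have hG'bz : G'.Adj b z := SimpleGraph.deleteEdges_adj.mpr ⟨hzb.symm, by
          rw [Set.mem_singleton_iff]
          exact fun h => hzbab (Sym2.eq_swap.trans h)⟩
        have hzbE : s(z, b) ∈ (Walk.cons hax p).edges := by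
          rw [hEq]; exact List.mem_append_left _ hzbq
        have hcz : c s(b, z) = δ₀ := by
          have h1 := hS _ hzbE
          rw [hc', Function.update_of_ne hzbab] at h1
          rw [show s(z, b) = s(b, z) from Sym2.eq_swap] at h1
          rcases h1 with h1 | h1
          · exact absurd ⟨z, hG'bz, h1⟩ hβb
          · exact h1
        have hδα : δ₀ = α := by
          have hmem : δ₀ ∈ colorsAt G' c a ∩ colorsAt G' c b :=
            ⟨⟨x, hG'ax, hcx⟩, ⟨z, hG'bz, hcz⟩⟩
          rw [hinter] at hmem
          exact hmem
        have hux : u = x := by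
          by_contra hne
          exact hc.1 hG'ax hau (fun hh => hne hh.symm) (by rw [hcx, hδα, hα])
        subst hux
        have hpnil : ¬ p.Nil := Walk.not_nil_of_ne hua
        obtain ⟨z', huz', r₃, hpeq⟩ := Walk.not_nil_iff.mp hpnil
        have hz'p : s(u, z') ∈ p.edges := by
          rw [hpeq, Walk.edges_cons]; exact List.mem_cons_self
        have hz'a : z' ≠ a := by
          rintro rfl
          exact hfe (by rw [Sym2.eq_swap]; exact hz'p)
        have hz'ab : s(u, z') ≠ s(a, b) := fun h => by
          rcases Sym2.eq_iff.mp h with ⟨h1, h2⟩ | ⟨h1, h2⟩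
          · exact hua h1
          · exact hub h1
        have hG'uz : G'.Adj u z' := SimpleGraph.deleteEdges_adj.mpr ⟨huz', by
          rw [Set.mem_singleton_iff]; exact hz'ab⟩
        have hfinal : c s(u, z') = β := by
          have h1 := hS _ (by rw [Walk.edges_cons]; exact List.mem_cons_of_mem _ hz'p)
          rw [hc', Function.update_of_ne hz'ab] at h1
          rcases h1 with h1 | h1
          · exact h1
          · exfalso
            refine hc.1 hG'uz hau.symm hz'a ?_
            rw [h1, hδα, show s(u, a) = s(a, u) from Sym2.eq_swap, hα]
        exact ⟨z', hG'uz, hz'a, hfinal⟩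
  refine ⟨key, ?_⟩
  set S := {β : χ | β ∉ colorsAt G' c a ∪ colorsAt G' c b} with hSdef
  have hSex : ∀ β ∈ S, ∃ z, G'.Adj u z ∧ z ≠ a ∧ c s(u, z) = β := fun β hβ => key β hβ
  let f : χ → V := fun β => if h : β ∈ S then (hSex β h).choose else a
  have hmaps : ∀ β ∈ S, f β ∈ (((G.neighborFinset u).erase a : Finset V) : Set V) := by
    intro β hβ
    have hspec := (hSex β hβ).choose_spec
    simp only [f, dif_pos hβ, Finset.coe_erase, Set.mem_diff, Finset.mem_coe,
      SimpleGraph.mem_neighborFinset _ _]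
    exact ⟨(SimpleGraph.deleteEdges_adj.mp hspec.1).1, by simpa using hspec.2.1⟩
  have hinj : Set.InjOn f S := by
    intro β₁ h₁ β₂ h₂ hf
    have s₁ := (hSex β₁ h₁).choose_spec
    have s₂ := (hSex β₂ h₂).choose_spec
    simp only [f, dif_pos h₁, dif_pos h₂] at hf
    rw [← s₁.2.2, ← s₂.2.2, hf]
  have hle := Set.ncard_le_ncard_of_injOn f hmaps hinj (Finset.finite_toSet _)
  rw [Set.ncard_coe_finset,
    Finset.card_erase_of_mem ((SimpleGraph.mem_neighborFinset _ _ _).mpr hau'.symm)] at hle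
  exact hle
end
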